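/- Let A be an associative unital ℂ-algebra, let q ∈ ℂ be a primitive 24th root of unity, and let e ∈ A satisfy e·e = (−q² − q⁻²)·e. Set σ = q·1 + q⁻¹·e and σ̄ = q⁻¹·1 + q·e. Then σ³ = q³·1 and σ̄³ = q⁻³·1; consequently σ³·σ̄³ = 1. -/
import Mathlib


/-- Over ℂ, if q is a primitive 24th root of unity and e·e = (−q² − q⁻²)·e, then
σ³ = q³·1, σ̄³ = q⁻³·1, and consequently σ³·σ̄³ = 1, where σ = q·1 + q⁻¹·e and
σ̄ = q⁻¹·1 + q·e. -/
theorem stmt_10 (A : Type*) [Ring A] [Algebra ℂ A] (q : ℂ)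
    (hq : q ^ (24 : ℕ) = 1 ∧ ∀ m : ℕ, 1 ≤ m → m < 24 → q ^ m ≠ 1)
    (e : A) (he : e * e = (-q ^ 2 - q⁻¹ ^ 2) • e)
    (σ σ' : A)
    (hσ : σ = q • (1 : A) + q⁻¹ • e)
    (hσ' : σ' = q⁻¹ • (1 : A) + q • e) :
    σ ^ 3 = (q ^ 3) • (1 : A) ∧ σ' ^ 3 = (q⁻¹ ^ 3) • (1 : A) ∧
      σ ^ 3 * σ' ^ 3 = 1 := by
  obtain ⟨h24, hmin⟩ := hq
  have hq0 : q ≠ 0 := by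
    intro h; rw [h] at h24; simp at h24
  have h12 : q ^ 12 = -1 := by
    have h : (q ^ 12 - 1) * (q ^ 12 + 1) = 0 := by linear_combination h24
    rcases mul_eq_zero.mp h with h | h
    · exact absurd (by linear_combination h) (hmin 12 (by norm_num) (by norm_num))
    · linear_combination h
  have h4 : q ^ 4 + 1 ≠ 0 := by
    intro h
    have : q ^ 8 = 1 := by linear_combination (q ^ 4 - 1) * h
    exact hmin 8 (by norm_num) (by norm_num) this
  have hkey : q ^ 8 - q ^ 4 + 1 = 0 := by
    have h : (q ^ 4 + 1) * (q ^ 8 - q ^ 4 + 1) = 0 := by linear_combination h12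
    rcases mul_eq_zero.mp h with h | h
    · exact absurd h h4
    · exact h
  have hinv : q⁻¹ = q ^ 23 := by
    field_simp
    linear_combination -h24
  have hs3 : σ ^ 3 = (q ^ 3) • (1 : A) := by
    subst hσ
    rw [hinv] at he ⊢
    rw [pow_succ, pow_succ, pow_one]
    simp only [mul_add, add_mul, smul_mul_assoc, mul_smul_comm, he, smul_smul,
      one_mul, mul_one, smul_add]
    match_scalars
    · ring
    · linear_combination (q + q ^ 17 - q ^ 21 - 2 * q ^ 25 + q ^ 41 - q ^ 45
        + q ^ 49 + q ^ 65 - q ^ 69 + q ^ 89 + 2 * q ^ 93 + q ^ 113 + q ^ 137) * h24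
        + (q + q ^ 5 - q ^ 13) * hkey
  have hs3' : σ' ^ 3 = (q⁻¹ ^ 3) • (1 : A) := by
    subst hσ'
    rw [hinv] at he ⊢
    rw [pow_succ, pow_succ, pow_one]
    simp only [mul_add, add_mul, smul_mul_assoc, mul_smul_comm, he, smul_smul,
      one_mul, mul_one, smul_add]
    match_scalars
    · ring
    · linear_combination (-q ^ 3 + q ^ 23 + 2 * q ^ 27 - 2 * q ^ 47 + q ^ 71) * h24
        + (-q ^ 3 + q ^ 11 + q ^ 15) * hkey
  refine ⟨hs3, hs3', ?_⟩
  rw [hs3, hs3', smul_mul_smul_comm, one_mul, ← mul_pow, mul_inv_cancel₀ hq0,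
    one_pow, one_smul]
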